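/- arXiv:1709.05102 — 2 statements merged into one kernel-verified Lean document; each statement's English description precedes it below -/
import Mathlib

section
/- Every continuous group homomorphism χ from the additive topological group (ℝ^ℕ, +) to the circle group U(1) is of the form χ = χ_λ for a unique finitely supported sequence λ ∈ ℝ^(ℕ), where χ_λ((x_j)_{j∈ℕ}) = exp(i Σ_{j∈ℕ} λ_j x_j). Hence λ ↦ χ_λ is a bijection from ℝ^(ℕ) onto the set of continuous characters of ℝ^ℕ. -/
open scoped BigOperators

open Complex intervalIntegral



/-- 1-D classification: every continuous character of ℝ (valued in ℂ, with |f|=1)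
is `t ↦ exp (λ t i)`. -/
lemma exists_char_real (f : ℝ → ℂ) (hc : Continuous f) (habs : ∀ t, ‖f t‖ = 1)
    (hhom : ∀ x y, f (x + y) = f x * f y) :
    ∃ lam : ℝ, ∀ t, f t = Complex.exp (lam * t * Complex.I) := by
  have hne : ∀ t, f t ≠ 0 := by
    intro t h
    have := habs t
    rw [h] at this
    simp at this
  have hf0 : f 0 = 1 := by
    have h := hhom 0 0
    rw [add_zero] at h
    have : (1 : ℂ) = f 0 :=
      mul_left_cancel₀ (hne 0) (show f 0 * 1 = f 0 * f 0 by rw [mul_one, ← h])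
    exact this.symm
  -- find a > 0 with positive real part of the integral
  obtain ⟨a, ha, hre⟩ : ∃ a > 0, ∀ t ∈ Set.Icc 0 a, 0 < (f t).re := by
    have : ContinuousAt (fun t => (f t).re) 0 := (Complex.continuous_re.comp hc).continuousAt
    have h1 : (f 0).re = 1 := by rw [hf0]; simp
    obtain ⟨δ, hδ, h⟩ := Metric.continuousAt_iff.mp this (1/2) (by norm_num)
    refine ⟨δ/2, by positivity, fun t ht => ?_⟩
    have : dist t 0 < δ := by
      rw [Real.dist_eq, sub_zero, _root_.abs_of_nonneg ht.1]
      linarith [ht.2]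
    have := h this
    rw [Real.dist_eq, h1] at this
    have := abs_lt.mp this
    linarith [this.1]
  set c : ℂ := ∫ t in (0:ℝ)..a, f t with hc_def
  have hcne : c ≠ 0 := by
    have hint : IntervalIntegrable f MeasureTheory.volume 0 a := hc.intervalIntegrable 0 a
    have hrepos : 0 < (∫ t in (0:ℝ)..a, (f t).re) := by
      apply intervalIntegral.intervalIntegral_pos_of_pos_on
        ((Complex.continuous_re.comp hc).intervalIntegrable 0 a)
      · exact fun x hx => hre x ⟨hx.1.le, hx.2.le⟩
      · exact ha
    have hcre : c.re = ∫ t in (0:ℝ)..a, (f t).re := by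
      rw [hc_def, intervalIntegral.integral_of_le ha.le,
        intervalIntegral.integral_of_le ha.le]
      exact (integral_re (hc.intervalIntegrable 0 a).1).symm
    intro h
    rw [h] at hcre
    simp at hcre
    rw [← hcre] at hrepos
    exact lt_irrefl _ hrepos
  set F : ℝ → ℂ := fun t => ∫ s in (0:ℝ)..t, f s with hF_def
  have hFderiv : ∀ t, HasDerivAt F (f t) t := fun t => (hc.integral_hasStrictDerivAt 0 t).hasDerivAt
  have key : ∀ t, c * f t = F (t + a) - F t := by
    intro t
    have h1 : F (t + a) - F t = ∫ s in t..(t+a), f s :=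
      intervalIntegral.integral_interval_sub_left (hc.intervalIntegrable 0 (t+a))
        (hc.intervalIntegrable 0 t)
    have h2 : (∫ s in t..(t+a), f s) = ∫ s in (0:ℝ)..a, f (t + s) := by
      rw [intervalIntegral.integral_comp_add_left (fun u => f u) t]
      norm_num
    have h3 : (∫ s in (0:ℝ)..a, f (t + s)) = f t * c := by
      rw [hc_def, ← intervalIntegral.integral_const_mul]
      congr 1
      ext s
      exact hhom t s
    rw [h1, h2, h3, mul_comm]
  set mu : ℂ := (f a - 1) / c with hmu_def
  have hfderiv : ∀ t, HasDerivAt f (mu * f t) t := by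
    intro t
    have h1 : HasDerivAt (fun t => (F (t + a) - F t) / c) ((f (t + a) - f t) / c) t := by
      have hA : HasDerivAt (fun t => F (t + a)) (f (t + a)) t := by
        simpa using (hFderiv (t + a)).comp_add_const t a
      exact (hA.sub (hFderiv t)).div_const c
    have heq : (fun t => (F (t + a) - F t) / c) = f := by
      ext u
      rw [← key u, mul_comm, mul_div_assoc, div_self hcne, mul_one]
    rw [heq] at h1
    convert h1 using 1
    rw [hhom t a, hmu_def]
    field_simp
  have hmuim : ∀ t, f t = Complex.exp (mu * t) := by
    have hg : ∀ t, HasDerivAt (fun t : ℝ => f t * Complex.exp (-(mu * t))) 0 t := by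
      intro t
      have hinner : HasDerivAt (fun t : ℝ => -(mu * (t:ℂ))) (-mu) t := by
        have : HasDerivAt (fun t : ℝ => (t : ℂ)) 1 t := Complex.ofRealCLM.hasDerivAt
        convert (this.const_mul mu).neg using 1
        · rfl
        · rfl
        · simp
      have hexp : HasDerivAt (fun t : ℝ => Complex.exp (-(mu * t)))
          (Complex.exp (-(mu * t)) * (-mu)) t := by
        simpa [mul_comm] using hinner.cexp
      have := (hfderiv t).mul hexp
      convert this using 1
      · rfl
      · rfl
      · ring
    have hconst : ∀ t : ℝ, f t * Complex.exp (-(mu * t)) = f 0 * Complex.exp (-(mu * 0)) := by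
      intro t
      exact is_const_of_deriv_eq_zero (fun x => (hg x).differentiableAt)
        (fun x => (hg x).deriv) t 0
    intro t
    have := hconst t
    rw [hf0] at this
    simp at this
    have h2 := congrArg (· * Complex.exp (mu * t)) this
    simp only [one_mul] at h2
    rw [mul_assoc, ← Complex.exp_add] at h2
    simpa using h2
  have hre0 : mu.re = 0 := by
    have h1 := habs 1
    rw [hmuim 1, Complex.norm_exp] at h1
    simp at h1
    exact h1
  refine ⟨mu.im, fun t => ?_⟩
  rw [hmuim t]
  congr 1
  have hmu : mu = (mu.im : ℂ) * Complex.I := by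
    nth_rewrite 1 [← Complex.re_add_im mu]
    rw [hre0]
    simp
  conv_lhs => rw [hmu]
  ring



lemma circle_eq_one_of_re_pos (z : Circle) (h : ∀ n : ℤ, 0 < ((z ^ n : Circle) : ℂ).re) : z = 1 := by
  set θ : ℝ := Complex.arg (z : ℂ) with hθ
  have habs : |θ| < Real.pi / 2 := by
    rw [Complex.abs_arg_lt_pi_div_two_iff]
    left
    have := h 1
    simpa using this
  have hz : Circle.exp θ = z := Circle.exp_arg z
  rcases eq_or_ne θ 0 with h0 | h0
  · rw [← hz, h0, Circle.exp_zero]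
  · exfalso
    set t : ℝ := |θ| with ht
    have ht0 : 0 < t := abs_pos.mpr h0
    set n : ℕ := ⌈Real.pi / (2 * t)⌉₊ with hn
    have hn1 : Real.pi / 2 ≤ n * t := by
      have : Real.pi / (2 * t) ≤ n := Nat.le_ceil _
      calc Real.pi / 2 = (Real.pi / (2 * t)) * t := by field_simp
        _ ≤ n * t := by nlinarith
    have hn2 : (n : ℝ) * t < Real.pi := by
      have : (n : ℝ) < Real.pi / (2 * t) + 1 := Nat.ceil_lt_add_one (by positivity)
      have h2 : (n : ℝ) * t < (Real.pi / (2 * t) + 1) * t := by nlinarith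
      have h3 : (Real.pi / (2 * t) + 1) * t = Real.pi / 2 + t := by field_simp
      rw [h3] at h2
      have : t < Real.pi / 2 := habs
      linarith
    have hcos : Real.cos ((n : ℝ) * t) ≤ 0 :=
      Real.cos_nonpos_of_pi_div_two_le_of_le hn1 (by linarith [Real.pi_pos])
    set k : ℤ := if 0 ≤ θ then (n : ℤ) else -(n : ℤ) with hk
    have hkθ : (k : ℝ) * θ = n * t := by
      rcases le_or_gt 0 θ with hle | hlt
      · rw [hk, if_pos hle]
        rw [ht, _root_.abs_of_nonneg hle]
        push_cast
        ring
      · rw [hk, if_neg (not_le.mpr hlt)]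
        rw [ht, abs_of_neg hlt]
        push_cast
        ring
    have hzk : ((z ^ k : Circle) : ℂ) = Complex.exp (((n : ℝ) * t : ℝ) * Complex.I) := by
      have h1 : ((z ^ k : Circle) : ℂ) = ((z : ℂ)) ^ k := by
        induction k using Int.induction_on with
        | zero => simp
        | succ i ih => rw [zpow_add_one, zpow_add_one₀ z.coe_ne_zero, Circle.coe_mul, ih]
        | pred i ih => rw [zpow_sub_one, zpow_sub_one₀ z.coe_ne_zero, Circle.coe_mul, ih, Circle.coe_inv]
      rw [h1, ← hz, Circle.coe_exp, ← Complex.exp_int_mul]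
      congr 1
      rw [show (k : ℂ) * ((θ : ℂ) * Complex.I) = (((k : ℝ) * θ : ℝ) : ℂ) * Complex.I by push_cast; ring, hkθ]
    have := h k
    rw [hzk, Complex.exp_ofReal_mul_I_re] at this
    linarith

/-- For a finitely supported sequence `l ∈ ℝ^(ℕ)`, the character
`χ_l : ℝ^ℕ → U(1)`, `x ↦ exp(i ∑ j, l j * x j)`. -/
noncomputable def charOfFinsupp (l : ℕ →₀ ℝ) (x : ℕ → ℝ) : Circle :=
  Circle.exp (l.sum fun j a => a * x j)

lemma circle_coe_continuous : Continuous fun z : Circle => (z : ℂ) := continuous_subtype_val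

lemma charOfFinsupp_single (m : ℕ →₀ ℝ) (j : ℕ) (t : ℝ) :
    charOfFinsupp m (Pi.single j t) = Circle.exp (m j * t) := by
  unfold charOfFinsupp
  congr 1
  rw [Finsupp.sum_eq_single j]
  · simp
  · intro b _ hbj
    simp [Pi.single_eq_of_ne hbj]
  · simp

lemma exp_mul_injective {a b : ℝ} (h : ∀ t : ℝ, Circle.exp (a * t) = Circle.exp (b * t)) :
    a = b := by
  by_contra hab
  set d : ℝ := a - b with hd
  have hd0 : d ≠ 0 := sub_ne_zero.mpr hab
  have h1 : ∀ t : ℝ, Circle.exp (d * t) = 1 := by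
    intro t
    rw [hd, sub_mul, Circle.exp_sub, h t]
    simp
  obtain ⟨m, hm⟩ := Circle.exp_eq_one.mp (by simpa using h1 1)
  have hm0 : (m : ℝ) ≠ 0 := by
    intro h0
    rw [h0, zero_mul] at hm
    exact hd0 hm
  have h2 := h1 (1 / (2 * m))
  rw [hm] at h2
  have h3 : (m : ℝ) * (2 * Real.pi) * (1 / (2 * m)) = Real.pi := by
    field_simp
  rw [h3] at h2
  have h4 : ((1 : Circle) : ℂ) = Complex.exp (Real.pi * Complex.I) := by
    rw [← h2, Circle.coe_exp]
  rw [Complex.exp_pi_mul_I] at h4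
  norm_num at h4

/-- Every continuous character `χ : ℝ^ℕ → U(1)` of the additive topological group `ℝ^ℕ`
(with the product topology) equals `χ_l` for a unique finitely supported sequence `l`;
hence `l ↦ χ_l` is a bijection from `ℝ^(ℕ)` onto the set of continuous characters. -/
theorem char_pi_real_eq_charOfFinsupp_unique (χ : (ℕ → ℝ) → Circle)
    (hcont : Continuous χ) (hhom : ∀ x y : ℕ → ℝ, χ (x + y) = χ x * χ y) :
    ∃! l : ℕ →₀ ℝ, χ = charOfFinsupp l := by
  classical
  have hχ0 : χ 0 = 1 := by
    have h := hhom 0 0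
    rw [add_zero] at h
    exact (mul_left_cancel (a := χ 0) (by rw [← h, mul_one])).symm
  set ψ : (ℕ → ℝ) →+ Additive Circle :=
    { toFun := fun x => Additive.ofMul (χ x)
      map_zero' := by simp [hχ0]
      map_add' := fun x y => by simp [hhom x y] } with hψ
  have hzpow : ∀ (x : ℕ → ℝ) (n : ℤ), χ (n • x) = χ x ^ n := by
    intro x n
    have h := map_zsmul ψ n x
    simpa [hψ] using congrArg Additive.toMul h
  have hprod : ∀ (s : Finset ℕ) (g : ℕ → (ℕ → ℝ)),
      χ (∑ i ∈ s, g i) = ∏ i ∈ s, χ (g i) := by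
    intro s g
    induction s using Finset.induction_on with
    | empty => simpa using hχ0
    | @insert a s' hni ih =>
        rw [Finset.sum_insert hni, Finset.prod_insert hni, hhom, ih]
  have hexp_sum : ∀ (s : Finset ℕ) (g : ℕ → ℝ),
      Circle.exp (∑ i ∈ s, g i) = ∏ i ∈ s, Circle.exp (g i) := by
    intro s g
    induction s using Finset.induction_on with
    | empty => simp
    | @insert a s' hni ih =>
        rw [Finset.sum_insert hni, Finset.prod_insert hni, Circle.exp_add, ih]
  -- coordinate characters
  have hcoord : ∀ j : ℕ, ∃ lam : ℝ, ∀ t : ℝ, χ (Pi.single j t) = Circle.exp (lam * t) := by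
    intro j
    have hc1 : Continuous fun t : ℝ => (Pi.single j t : ℕ → ℝ) := by
      apply continuous_pi
      intro i
      rcases eq_or_ne i j with rfl | hij
      · simpa [Pi.single_eq_same] using continuous_id'
      · simpa [Pi.single_eq_of_ne hij] using continuous_const
    obtain ⟨lam, hlam⟩ := exists_char_real (fun t => (χ (Pi.single j t) : ℂ))
      (circle_coe_continuous.comp (hcont.comp hc1))
      (fun t => Circle.norm_coe _)
      (fun x y => by
        show ((χ (Pi.single j (x + y)) : ℂ)) = (χ (Pi.single j x) : ℂ) * (χ (Pi.single j y) : ℂ)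
        rw [show (Pi.single j (x + y) : ℕ → ℝ) = Pi.single j x + Pi.single j y by
          ext i; rcases eq_or_ne i j with rfl | hij
          · simp
          · simp [Pi.single_eq_of_ne hij]]
        rw [hhom, Circle.coe_mul])
    refine ⟨lam, fun t => Circle.coe_injective ?_⟩
    rw [hlam t, Circle.coe_exp]
    push_cast
    ring_nf
  choose lam hlam using hcoord
  -- the small neighborhood
  have hnhd : χ ⁻¹' {z : Circle | 0 < ((z : Circle) : ℂ).re} ∈ nhds (0 : ℕ → ℝ) := by
    apply hcont.continuousAt.preimage_mem_nhds
    rw [hχ0]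
    exact (isOpen_lt continuous_const (Complex.continuous_re.comp circle_coe_continuous)).mem_nhds
      (by norm_num)
  rw [nhds_pi, Filter.mem_pi'] at hnhd
  obtain ⟨I, t, ht, hsub⟩ := hnhd
  have hV : ∀ x : ℕ → ℝ, (∀ i ∈ I, x i = 0) → χ x = 1 := by
    intro x hx
    apply circle_eq_one_of_re_pos
    intro n
    rw [← hzpow x n]
    have hmem : (n • x) ∈ Set.pi ↑I t := by
      intro i hi
      have : (n • x) i = 0 := by
        simp only [Pi.smul_apply, hx i hi, smul_zero]
      rw [this]
      exact mem_of_mem_nhds (ht i)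
    exact hsub hmem
  -- the finsupp
  set l : ℕ →₀ ℝ := Finsupp.onFinset I (fun i => if i ∈ I then lam i else 0)
    (fun i h => by by_contra hi; simp [hi] at h) with hl_def
  have hl_supp : l.support ⊆ I := Finsupp.support_onFinset_subset
  have hl_eq : ∀ i ∈ I, l i = lam i := fun i hi => by simp [hl_def, hi]
  have hmain : χ = charOfFinsupp l := by
    funext x
    set r : ℕ → ℝ := fun j => if j ∈ I then 0 else x j with hr
    have hxsr : x = (∑ i ∈ I, Pi.single i (x i)) + r := by
      funext j
      rw [Pi.add_apply, Finset.sum_apply, Finset.sum_pi_single]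
      by_cases hj : j ∈ I <;> simp [hr, hj]
    have hχr : χ r = 1 := hV r (fun i hi => by simp [hr, hi])
    have h1 : ∀ i ∈ I, χ (Pi.single i (x i)) = Circle.exp (lam i * x i) :=
      fun i _ => hlam i (x i)
    have h2 : charOfFinsupp l x = Circle.exp (∑ i ∈ I, lam i * x i) := by
      unfold charOfFinsupp
      congr 1
      rw [Finsupp.sum_of_support_subset l hl_supp _ (fun i _ => by simp)]
      exact Finset.sum_congr rfl fun i hi => by rw [hl_eq i hi]
    rw [h2]
    conv_lhs => rw [hxsr]
    rw [hhom, hχr, mul_one, hprod, Finset.prod_congr rfl h1, ← hexp_sum]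
  refine ⟨l, hmain, fun l' hl' => ?_⟩
  ext j
  apply exp_mul_injective
  intro t
  have h1 := congrFun (hl'.symm.trans hmain) (Pi.single j t)
  rwa [charOfFinsupp_single, charOfFinsupp_single] at h1
end

section
/- Let J be an arbitrary nonempty index set and consider the additive topological group ℝ^J with the product topology. Every continuous group homomorphism χ : ℝ^J → U(1) is of the form χ(x) = exp(i Σ_{j∈F} λ_j x_j) for some finite subset F ⊆ J and real numbers (λ_j)_{j∈F}; in particular χ factors through the projection onto finitely many coordinates. -/
open scoped BigOperators
open Real

private lemma circle_exp_nat_mul (θ : ℝ) : ∀ n : ℕ, Circle.exp θ ^ n = Circle.exp (n * θ)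
  | 0 => by simp
  | n + 1 => by
      rw [pow_succ, circle_exp_nat_mul θ n, ← Circle.exp_add]
      push_cast
      ring_nf

private lemma circle_re_exp (t : ℝ) : ((Circle.exp t : ℂ)).re = Real.cos t := by
  rw [Circle.coe_exp]
  exact Complex.exp_ofReal_mul_I_re t

private lemma circle_eq_one_of_pow_re_pos {z : Circle}
    (h : ∀ n : ℕ, 0 < (((z ^ n : Circle) : ℂ)).re) : z = 1 := by
  classical
  by_contra hz
  set θ := Complex.arg (z : ℂ) with hθdef
  have hz1 : z = Circle.exp θ := (Circle.exp_arg z).symm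
  have hθ0 : θ ≠ 0 := by
    intro h0
    apply hz
    rw [hz1, h0, Circle.exp_zero]
  have habs : |θ| < π / 2 := by
    have h1 := h 1
    rw [pow_one] at h1
    exact Complex.abs_arg_lt_pi_div_two_iff.mpr (Or.inl h1)
  have hapos : 0 < |θ| := abs_pos.mpr hθ0
  obtain ⟨m, hm⟩ := exists_nat_ge (π / 2 / |θ|)
  have hex : ∃ n : ℕ, π / 2 ≤ (n : ℝ) * |θ| :=
    ⟨m, by rw [div_le_iff₀ hapos] at hm; linarith⟩
  set n := Nat.find hex with hn_def
  have hn : π / 2 ≤ (n : ℝ) * |θ| := Nat.find_spec hex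
  have hn0 : n ≠ 0 := by
    intro h0
    rw [h0] at hn
    simp at hn
    linarith [Real.pi_pos]
  have hlt : ((n - 1 : ℕ) : ℝ) * |θ| < π / 2 := by
    have := Nat.find_min hex (Nat.pred_lt hn0)
    push_neg at this
    exact this
  have hcast : ((n - 1 : ℕ) : ℝ) = (n : ℝ) - 1 := by
    rw [Nat.cast_sub (Nat.one_le_iff_ne_zero.mpr hn0)]
    simp
  have hub : (n : ℝ) * |θ| < π := by
    have heq : (n : ℝ) * |θ| = ((n - 1 : ℕ) : ℝ) * |θ| + |θ| := by rw [hcast]; ring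
    rw [heq]
    linarith
  have hcos : Real.cos ((n : ℝ) * |θ|) ≤ 0 :=
    Real.cos_nonpos_of_pi_div_two_le_of_le hn (by linarith [Real.pi_pos])
  have hre : (((z ^ n : Circle) : ℂ)).re = Real.cos ((n : ℝ) * θ) := by
    rw [hz1, circle_exp_nat_mul, circle_re_exp]
  have hreθ : Real.cos ((n : ℝ) * θ) = Real.cos ((n : ℝ) * |θ|) := by
    rcases abs_cases θ with ⟨he, _⟩ | ⟨he, _⟩
    · rw [he]
    · rw [he, mul_neg, Real.cos_neg]
  have := h n
  rw [hre, hreθ] at this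
  linarith

private lemma one_dim_char (c : ℝ → Circle) (hc : Continuous c)
    (hadd : ∀ s t : ℝ, c (s + t) = c s * c t) :
    ∃ l : ℝ, ∀ t : ℝ, c t = Circle.exp (l * t) := by
  have h0 : c 0 = 1 := by
    have h := hadd 0 0
    rw [add_zero] at h
    exact (left_eq_mul.mp h)
  have hneg : ∀ t : ℝ, c (-t) = (c t)⁻¹ := by
    intro t
    have h := hadd t (-t)
    rw [add_neg_cancel, h0] at h
    exact eq_inv_of_mul_eq_one_right h.symm
  have hnsmul : ∀ (n : ℕ) (t : ℝ), c ((n : ℝ) * t) = c t ^ n := by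
    intro n t
    induction n with
    | zero => simpa using h0
    | succ n ih =>
        have : ((n : ℝ) + 1) * t = (n : ℝ) * t + t := by ring
        push_cast
        rw [this, hadd, ih, pow_succ]
  -- find δ
  have hco : Continuous fun t : ℝ => ((c t : ℂ)).re :=
    Complex.continuous_re.comp (continuous_induced_dom.comp hc)
  have hev : ∀ᶠ t in nhds (0 : ℝ), 0 < ((c t : ℂ)).re := by
    have h1 : ((c 0 : ℂ)).re = 1 := by rw [h0]; simp
    have := (hco.tendsto 0)
    rw [h1] at this
    exact this.eventually (eventually_gt_nhds one_pos)
  obtain ⟨δ, hδpos, hδ⟩ := Metric.eventually_nhds_iff.mp hev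
  set b := δ / 2 with hb_def
  have hb : 0 < b := by positivity
  have hsmall : ∀ n : ℕ, |b / 2 ^ n| < δ := by
    intro n
    rw [abs_of_pos (by positivity)]
    have h1 : (1 : ℝ) ≤ 2 ^ n := one_le_pow₀ (by norm_num)
    have : b / 2 ^ n ≤ b := by
      rw [div_le_iff₀ (by positivity)]
      nlinarith
    linarith
  have hargsmall : ∀ t : ℝ, |t| < δ → |Complex.arg (c t)| < π / 2 := by
    intro t ht
    have : 0 < ((c t : ℂ)).re := hδ (by simpa [Real.dist_eq] using ht)
    exact Complex.abs_arg_lt_pi_div_two_iff.mpr (Or.inl this)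
  set A := Complex.arg (c b) with hA_def
  have key : ∀ n : ℕ, Complex.arg (c (b / 2 ^ n)) = A / 2 ^ n := by
    intro n
    induction n with
    | zero => simp [hA_def]
    | succ n ih =>
        set w := c (b / 2 ^ (n + 1)) with hw_def
        have hw2 : w * w = c (b / 2 ^ n) := by
          rw [hw_def, ← hadd]
          congr 1
          field_simp
          ring
        have harg_w : |Complex.arg (w : ℂ)| < π / 2 := hargsmall _ (hsmall (n + 1))
        have hw_bounds := abs_lt.mp harg_w
        have hwe : (w : Circle) = Circle.exp (Complex.arg (w : ℂ)) := (Circle.exp_arg w).symm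
        have hcb : c (b / 2 ^ n) = Circle.exp (2 * Complex.arg (w : ℂ)) := by
          rw [← hw2]
          conv_lhs => rw [hwe]
          rw [← Circle.exp_add]
          congr 1
          ring
        have harg : Complex.arg (c (b / 2 ^ n)) = 2 * Complex.arg (w : ℂ) := by
          rw [hcb, Circle.arg_exp (by linarith [Real.pi_pos]) (by linarith)]
        rw [ih] at harg
        have h2 : (2 : ℝ) ^ (n + 1) = 2 ^ n * 2 := by ring
        rw [h2]
        rw [eq_comm] at harg
        field_simp at harg ⊢
        linarith
  have hexp_eq : ∀ n : ℕ, c (b / 2 ^ n) = Circle.exp (A / 2 ^ n) := by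
    intro n
    rw [← key n]
    exact (Circle.exp_arg _).symm
  set l := A / b with hl_def
  have hD : ∀ n k : ℕ, c ((k : ℝ) * (b / 2 ^ n)) = Circle.exp (l * ((k : ℝ) * (b / 2 ^ n))) := by
    intro n k
    rw [hnsmul, hexp_eq n, circle_exp_nat_mul]
    congr 1
    rw [hl_def]
    field_simp
  set S := {t : ℝ | c t = Circle.exp (l * t)} with hS_def
  have hS_closed : IsClosed S := by
    apply isClosed_eq hc
    exact Circle.exp.continuous.comp (continuous_const.mul continuous_id)
  have hpow_tendsto : Filter.Tendsto (fun n : ℕ => b / 2 ^ n) Filter.atTop (nhds 0) := by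
    have h2 : Filter.Tendsto (fun n : ℕ => ((1 : ℝ) / 2) ^ n) Filter.atTop (nhds 0) :=
      tendsto_pow_atTop_nhds_zero_of_lt_one (by norm_num) (by norm_num)
    have : (fun n : ℕ => b / 2 ^ n) = fun n : ℕ => b * ((1 : ℝ) / 2) ^ n := by
      funext n
      rw [div_pow, one_pow]
      ring
    rw [this]
    simpa using tendsto_const_nhds.mul h2
  have hpos : ∀ t : ℝ, 0 ≤ t → t ∈ S := by
    intro t ht
    set u : ℕ → ℝ := fun n => (⌊t * 2 ^ n / b⌋₊ : ℝ) * (b / 2 ^ n) with hu_def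
    have hu_le : ∀ n, u n ≤ t := by
      intro n
      have hx : 0 ≤ t * 2 ^ n / b := by positivity
      have := Nat.floor_le hx
      calc u n ≤ (t * 2 ^ n / b) * (b / 2 ^ n) := by
                  apply mul_le_mul_of_nonneg_right this (by positivity)
        _ = t := by field_simp
    have hu_ge : ∀ n, t - b / 2 ^ n ≤ u n := by
      intro n
      have := Nat.sub_one_lt_floor (t * 2 ^ n / b)
      have h2 : (t * 2 ^ n / b - 1) * (b / 2 ^ n) ≤ u n :=
        mul_le_mul_of_nonneg_right this.le (by positivity)
      calc t - b / 2 ^ n = (t * 2 ^ n / b - 1) * (b / 2 ^ n) := by field_simp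
        _ ≤ u n := h2
    have htend : Filter.Tendsto u Filter.atTop (nhds t) := by
      refine tendsto_of_tendsto_of_tendsto_of_le_of_le ?_ tendsto_const_nhds hu_ge hu_le
      simpa using tendsto_const_nhds.sub hpow_tendsto
    exact hS_closed.mem_of_tendsto htend (Filter.Eventually.of_forall fun n => hD n _)
  refine ⟨l, fun t => ?_⟩
  rcases le_or_gt 0 t with ht | ht
  · exact hpos t ht
  · have h1 : c (-t) = Circle.exp (l * (-t)) := hpos (-t) (by linarith)
    have h2 := hneg (-t)
    rw [neg_neg] at h2
    rw [h2, h1, ← Circle.exp_neg]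
    congr 1
    ring

/-- For an arbitrary nonempty index set `J`, every continuous character
`χ : ℝ^J → U(1)` of the additive topological group `ℝ^J` (product topology) has the form
`χ(x) = exp(i ∑_{j ∈ F} λ_j x_j)` for some finite `F ⊆ J` and reals `(λ_j)`; in particular
`χ` factors through the projection onto the coordinates in `F`. -/
theorem char_pi_real_factors_through_finite {J : Type*} [Nonempty J]
    (χ : (J → ℝ) → Circle) (hcont : Continuous χ)
    (hhom : ∀ x y : J → ℝ, χ (x + y) = χ x * χ y) :
    ∃ (F : Finset J) (l : J → ℝ),
      (∀ x : J → ℝ, χ x = Circle.exp (∑ j ∈ F, l j * x j)) ∧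
      (∀ x y : J → ℝ, (∀ j ∈ F, x j = y j) → χ x = χ y) := by
  classical
  have h0 : χ 0 = 1 := by
    have h := hhom 0 0
    rw [add_zero] at h
    exact (left_eq_mul.mp h)
  have hχpow : ∀ (n : ℕ) (x : J → ℝ), χ (n • x) = χ x ^ n := by
    intro n x
    induction n with
    | zero => simpa using h0
    | succ n ih => rw [succ_nsmul, hhom, ih, pow_succ]
  have hW : IsOpen {z : Circle | 0 < ((z : ℂ)).re} := by
    have hcre : Continuous fun z : Circle => ((z : ℂ)).re :=
      Complex.continuous_re.comp continuous_induced_dom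
    exact isOpen_lt continuous_const hcre
  have hpre : IsOpen (χ ⁻¹' {z : Circle | 0 < ((z : ℂ)).re}) := hW.preimage hcont
  have h0mem : (0 : J → ℝ) ∈ χ ⁻¹' {z : Circle | 0 < ((z : ℂ)).re} := by
    simp only [Set.mem_preimage, Set.mem_setOf_eq, h0]
    norm_num
  obtain ⟨F, u, hu, hsub⟩ := isOpen_pi_iff.mp hpre 0 h0mem
  have hker : ∀ x : J → ℝ, (∀ j ∈ F, x j = 0) → χ x = 1 := by
    intro x hx
    apply circle_eq_one_of_pow_re_pos
    intro n
    have hmem : (n • x) ∈ (F : Set J).pi u := by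
      intro j hj
      have hzero : (n • x) j = 0 := by simp [hx j hj]
      rw [hzero]
      simpa using (hu j hj).2
    have := hsub hmem
    rw [Set.mem_preimage, Set.mem_setOf_eq, hχpow] at this
    exact this
  have hfac : ∀ x y : J → ℝ, (∀ j ∈ F, x j = y j) → χ x = χ y := by
    intro x y hxy
    have h1 : χ x = χ (x - y) * χ y := by
      rw [← hhom, sub_add_cancel]
    rw [h1, hker (x - y) (fun j hj => by simp [hxy j hj]), one_mul]
  have hsing : ∀ j : J, Continuous fun t : ℝ => (Pi.single j t : J → ℝ) := by
    intro j
    apply continuous_pi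
    intro i
    rcases eq_or_ne i j with rfl | hij
    · simp only [Pi.single_eq_same]
      exact continuous_id
    · simp only [Pi.single_eq_of_ne hij]
      exact continuous_const
  have hcj : ∀ j : J, ∃ lj : ℝ, ∀ t : ℝ, χ (Pi.single j t) = Circle.exp (lj * t) := by
    intro j
    apply one_dim_char (fun t => χ (Pi.single j t)) (hcont.comp (hsing j))
    intro s t
    rw [← hhom, ← Pi.single_add]
  choose l hl using hcj
  have hsum : ∀ (s : Finset J) (f : J → (J → ℝ)), χ (∑ j ∈ s, f j) = ∏ j ∈ s, χ (f j) := by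
    intro s f
    induction s using Finset.induction_on with
    | empty => simpa using h0
    | insert a s hj ih =>
        rw [Finset.sum_insert hj, Finset.prod_insert hj, hhom, ih]
  have hexpsum : ∀ (s : Finset J) (g : J → ℝ),
      Circle.exp (∑ j ∈ s, g j) = ∏ j ∈ s, Circle.exp (g j) := by
    intro s g
    induction s using Finset.induction_on with
    | empty => simp
    | insert a s hj ih =>
        rw [Finset.sum_insert hj, Finset.prod_insert hj, Circle.exp_add, ih]
  refine ⟨F, l, fun x => ?_, hfac⟩
  have hx : χ x = χ (∑ j ∈ F, Pi.single j (x j)) := by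
    apply hfac
    intro j hj
    simp [Finset.sum_apply, Finset.sum_pi_single, hj]
  rw [hx, hsum, hexpsum]
  apply Finset.prod_congr rfl
  intro j _
  exact hl j (x j)
end
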